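/- Let X and Y be vector spaces over ℝ and let f : X → Y satisfy: (i) f(0) = 0; (ii) for every line L ⊆ X, the image f '' L is either a point or a line in Y; and (iii) for every line L ⊆ X, if f '' L is a line in Y then the restriction of f to L is injective. Suppose a, b ∈ X are such that f(a) and f(b) are linearly independent in Y. Then for every r ∈ ℝ there exists s ∈ ℝ such that f(r • a) = s • f(a) and f(r • b) = s • f(b). -/

import Mathlib

def IsLine {X : Type*} [AddCommGroup X] [Module ℝ X] (L : Set X) : Prop :=
  ∃ o d : X, d ≠ 0 ∧ L = {x | ∃ r : ℝ, x = r • d + o}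

def IsPoint {X : Type*} (S : Set X) : Prop := ∃ p : X, S = {p}

lemma line_eq_two_pts {Y : Type*} [AddCommGroup Y] [Module ℝ Y] {L : Set Y}
    (hL : IsLine L) {p q : Y} (hp : p ∈ L) (hq : q ∈ L) (hpq : p ≠ q) :
    L = {x | ∃ t : ℝ, x = t • (q - p) + p} := by
  obtain ⟨o, d, hd, rfl⟩ := hL
  obtain ⟨r0, hr0⟩ := hp
  obtain ⟨r1, hr1⟩ := hq
  have hr : r1 - r0 ≠ 0 := fun h => hpq (by rw [hr0, hr1, sub_eq_zero.mp h])
  ext x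
  simp only [Set.mem_setOf_eq]
  constructor
  · rintro ⟨s, rfl⟩
    exact ⟨(s - r0) / (r1 - r0), by rw [hr0, hr1]; match_scalars <;> field_simp <;> ring⟩
  · rintro ⟨t, rfl⟩
    exact ⟨r0 + t * (r1 - r0), by rw [hr0, hr1]; module⟩

lemma span_facts {X Y : Type*} [AddCommGroup X] [Module ℝ X] [AddCommGroup Y] [Module ℝ Y]
    (f : X → Y) (h0 : f 0 = 0)
    (h1 : ∀ L : Set X, IsLine L → IsPoint (f '' L) ∨ IsLine (f '' L))
    (h2 : ∀ L : Set X, IsLine L → IsLine (f '' L) → Set.InjOn f L)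
    (x : X) (hfx : f x ≠ 0) :
    (∀ t : ℝ, ∃ w : ℝ, f (t • x) = w • f x) ∧ Set.InjOn f {y : X | ∃ t : ℝ, y = t • x} := by
  have hx : x ≠ 0 := fun h => hfx (h ▸ h0)
  set S : Set X := {y : X | ∃ t : ℝ, y = t • x} with hSdef
  have hS : IsLine S := ⟨0, x, hx, by ext y; simp [hSdef]⟩
  have h0S : (0 : X) ∈ S := ⟨0, by module⟩
  have hxS : x ∈ S := ⟨1, by module⟩
  have h0i : (0 : Y) ∈ f '' S := ⟨0, h0S, h0⟩
  have hxi : f x ∈ f '' S := ⟨x, hxS, rfl⟩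
  have hline : IsLine (f '' S) := by
    refine (h1 S hS).resolve_left ?_
    rintro ⟨p, hp⟩
    rw [hp] at h0i hxi
    exact hfx (hxi.trans h0i.symm)
  have heq : f '' S = {y | ∃ t : ℝ, y = t • (f x - 0) + 0} :=
    line_eq_two_pts hline h0i hxi (fun h => hfx h.symm)
  refine ⟨fun t => ?_, h2 S hS hline⟩
  have hmem : f (t • x) ∈ f '' S := ⟨t • x, ⟨t, rfl⟩, rfl⟩
  rw [heq] at hmem
  obtain ⟨w, hw⟩ := hmem
  exact ⟨w, by rw [hw]; module⟩

theorem common_scaling_factor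
    {X Y : Type*} [AddCommGroup X] [Module ℝ X] [AddCommGroup Y] [Module ℝ Y]
    (f : X → Y) (h0 : f 0 = 0)
    (h1 : ∀ L : Set X, IsLine L → IsPoint (f '' L) ∨ IsLine (f '' L))
    (h2 : ∀ L : Set X, IsLine L → IsLine (f '' L) → Set.InjOn f L)
    (a b : X)
    (hind : ∀ r s : ℝ, r • f a + s • f b = 0 → r = 0 ∧ s = 0) :
    ∀ r : ℝ, ∃ s : ℝ, f (r • a) = s • f a ∧ f (r • b) = s • f b := by
  have hfa : f a ≠ 0 := fun h => one_ne_zero (hind 1 0 (by rw [h]; module)).1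
  have hfb : f b ≠ 0 := fun h => one_ne_zero (hind 0 1 (by rw [h]; module)).2
  have hfab : f a ≠ f b := fun h => one_ne_zero (hind 1 (-1) (by rw [h]; module)).1
  have ha0 : a ≠ 0 := fun h => hfa (h ▸ h0)
  have hb0 : b ≠ 0 := fun h => hfb (h ▸ h0)
  obtain ⟨hAspan, hAinj⟩ := span_facts f h0 h1 h2 a hfa
  obtain ⟨hBspan, hBinj⟩ := span_facts f h0 h1 h2 b hfb
  -- a and b are linearly independent in X
  have hXind : ∀ u v : ℝ, u • a + v • b = 0 → u = 0 ∧ v = 0 := by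
    intro u v huv
    by_cases hv : v = 0
    · subst hv
      rw [zero_smul, add_zero] at huv
      rcases smul_eq_zero.mp huv with h | h
      · exact ⟨h, rfl⟩
      · exact absurd h ha0
    · exfalso
      have hb' : b = (v⁻¹ * -u) • a := by
        have h' : v • b = -(u • a) := eq_neg_of_add_eq_zero_left (by rw [add_comm] at huv; exact huv)
        calc b = v⁻¹ • (v • b) := by rw [smul_smul]; field_simp; rw [one_smul]
          _ = v⁻¹ • (-(u • a)) := by rw [h']
          _ = (v⁻¹ * -u) • a := by rw [smul_neg, smul_smul]; module
      obtain ⟨w, hw⟩ := hAspan (v⁻¹ * -u)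
      rw [← hb'] at hw
      have := (hind w (-1) (by rw [hw]; module)).2
      norm_num at this
  have hab : a ≠ b := fun h => hfab (by rw [h])
  have hba : b - a ≠ 0 := sub_ne_zero.2 (Ne.symm hab)
  intro r
  by_cases hr0 : r = 0
  · exact ⟨0, by subst hr0; simp [h0]⟩
  by_cases hr1 : r = 1
  · exact ⟨1, by subst hr1; simp⟩
  obtain ⟨sa, hsa⟩ := hAspan r
  obtain ⟨sb, hsb⟩ := hBspan r
  refine ⟨sa, hsa, ?_⟩
  suffices hss : sa = sb by rw [hsb, hss]
  by_contra hne
  have hsab : sa - sb ≠ 0 := sub_ne_zero.2 hne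
  have hsa0 : sa ≠ 0 := by
    intro h
    have hra : r • a = (0:ℝ) • a :=
      hAinj ⟨r, rfl⟩ ⟨0, rfl⟩ (by rw [hsa, h, zero_smul, zero_smul, h0])
    rw [zero_smul] at hra
    rcases smul_eq_zero.mp hra with h' | h'
    · exact hr0 h'
    · exact ha0 h'
  have hsb0 : sb ≠ 0 := by
    intro h
    have hrb : r • b = (0:ℝ) • b :=
      hBinj ⟨r, rfl⟩ ⟨0, rfl⟩ (by rw [hsb, h, zero_smul, zero_smul, h0])
    rw [zero_smul] at hrb
    rcases smul_eq_zero.mp hrb with h' | h'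
    · exact hr0 h'
    · exact hb0 h'
  have hrba : r • b - r • a ≠ 0 := by
    intro h
    have h' : r • (b - a) = 0 := by rw [smul_sub]; exact h
    rcases smul_eq_zero.mp h' with h'' | h''
    · exact hr0 h''
    · exact hba h''
  -- Line L1 through a and b
  have hL1 : IsLine {x : X | ∃ t : ℝ, x = t • (b - a) + a} := ⟨a, b - a, hba, rfl⟩
  have haL1 : a ∈ {x : X | ∃ t : ℝ, x = t • (b - a) + a} := ⟨0, by module⟩
  have hbL1 : b ∈ {x : X | ∃ t : ℝ, x = t • (b - a) + a} := ⟨1, by module⟩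
  have hfaL1 : f a ∈ f '' {x : X | ∃ t : ℝ, x = t • (b - a) + a} := ⟨a, haL1, rfl⟩
  have hfbL1 : f b ∈ f '' {x : X | ∃ t : ℝ, x = t • (b - a) + a} := ⟨b, hbL1, rfl⟩
  have himg1 : IsLine (f '' {x : X | ∃ t : ℝ, x = t • (b - a) + a}) := by
    refine (h1 _ hL1).resolve_left ?_
    rintro ⟨p, hp⟩
    rw [hp] at hfaL1 hfbL1
    exact hfab (hfaL1.trans hfbL1.symm)
  have hinj1 := h2 _ hL1 himg1
  have heq1 : f '' {x : X | ∃ t : ℝ, x = t • (b - a) + a}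
      = {y : Y | ∃ t : ℝ, y = t • (f b - f a) + f a} :=
    line_eq_two_pts himg1 hfaL1 hfbL1 hfab
  -- Line L2 through r•a and r•b
  have hL2 : IsLine {x : X | ∃ t : ℝ, x = t • (r • b - r • a) + r • a} := ⟨r • a, _, hrba, rfl⟩
  have hraL2 : r • a ∈ {x : X | ∃ t : ℝ, x = t • (r • b - r • a) + r • a} := ⟨0, by module⟩
  have hrbL2 : r • b ∈ {x : X | ∃ t : ℝ, x = t • (r • b - r • a) + r • a} := ⟨1, by module⟩
  have hfraL2 : f (r • a) ∈ f '' {x : X | ∃ t : ℝ, x = t • (r • b - r • a) + r • a} :=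
    ⟨r • a, hraL2, rfl⟩
  have hfrbL2 : f (r • b) ∈ f '' {x : X | ∃ t : ℝ, x = t • (r • b - r • a) + r • a} :=
    ⟨r • b, hrbL2, rfl⟩
  have hfrab : f (r • a) ≠ f (r • b) := by
    rw [hsa, hsb]
    intro h
    exact hsa0 (hind sa (-sb) (by rw [neg_smul, h]; module)).1
  have himg2 : IsLine (f '' {x : X | ∃ t : ℝ, x = t • (r • b - r • a) + r • a}) := by
    refine (h1 _ hL2).resolve_left ?_
    rintro ⟨p, hp⟩
    rw [hp] at hfraL2 hfrbL2
    exact hfrab (hfraL2.trans hfrbL2.symm)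
  have hinj2 := h2 _ hL2 himg2
  have heq2 : f '' {x : X | ∃ t : ℝ, x = t • (r • b - r • a) + r • a}
      = {y : Y | ∃ t : ℝ, y = t • (f (r • b) - f (r • a)) + f (r • a)} :=
    line_eq_two_pts himg2 hfraL2 hfrbL2 hfrab
  -- The intersection point P of the images
  set t0 : ℝ := sb * (sa - 1) / (sa - sb) with ht0def
  have hP1 : t0 • (f b - f a) + f a ∈ f '' {x : X | ∃ t : ℝ, x = t • (b - a) + a} := by
    rw [heq1]; exact ⟨t0, rfl⟩
  have hP2 : t0 • (f b - f a) + f a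
      ∈ f '' {x : X | ∃ t : ℝ, x = t • (r • b - r • a) + r • a} := by
    rw [heq2]
    refine ⟨(sa - 1) / (sa - sb), ?_⟩
    rw [hsa, hsb, ht0def]
    match_scalars <;> field_simp <;> ring
  obtain ⟨x1, hx1L, hfx1⟩ := hP1
  obtain ⟨x2, hx2L, hfx2⟩ := hP2
  obtain ⟨t1, ht1⟩ := id hx1L
  obtain ⟨t2, ht2⟩ := id hx2L
  have hdAB : x2 - x1 = (r - r * t2 - 1 + t1) • a + (r * t2 - t1) • b := by
    rw [ht1, ht2]; module
  have hx12 : x1 ≠ x2 := by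
    intro h
    have h' : (r - r * t2 - 1 + t1) • a + (r * t2 - t1) • b = 0 := by
      rw [← hdAB, h, sub_self]
    obtain ⟨hA', hB'⟩ := hXind _ _ h'
    exact hr1 (by linarith)
  -- The line M through x1 and x2 maps to the single point P
  have hM : IsLine {x : X | ∃ t : ℝ, x = t • (x2 - x1) + x1} :=
    ⟨x1, x2 - x1, sub_ne_zero.2 (Ne.symm hx12), rfl⟩
  have hx1M : x1 ∈ {x : X | ∃ t : ℝ, x = t • (x2 - x1) + x1} := ⟨0, by module⟩
  have hx2M : x2 ∈ {x : X | ∃ t : ℝ, x = t • (x2 - x1) + x1} := ⟨1, by module⟩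
  have hMpt : IsPoint (f '' {x : X | ∃ t : ℝ, x = t • (x2 - x1) + x1}) := by
    refine (h1 _ hM).resolve_right ?_
    intro hl
    exact hx12 (h2 _ hM hl hx1M hx2M (hfx1.trans hfx2.symm))
  obtain ⟨p, hp⟩ := hMpt
  have hpP : p = t0 • (f b - f a) + f a := by
    have hmem : f x1 ∈ f '' {x : X | ∃ t : ℝ, x = t • (x2 - x1) + x1} := ⟨x1, hx1M, rfl⟩
    rw [hp] at hmem
    exact (Set.mem_singleton_iff.mp hmem).symm.trans hfx1
  have hconst : ∀ m : X, (∃ t : ℝ, m = t • (x2 - x1) + x1) →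
      f m = t0 • (f b - f a) + f a := by
    intro m hm
    have hmem : f m ∈ f '' {x : X | ∃ t : ℝ, x = t • (x2 - x1) + x1} := ⟨m, hm, rfl⟩
    rw [hp] at hmem
    exact (Set.mem_singleton_iff.mp hmem).trans hpP
  rcases eq_or_ne (r * t2 - t1) 0 with hB | hB
  · -- direction parallel to a: intersect M with span b
    have hA : r - r * t2 - 1 + t1 ≠ 0 := by
      intro h
      apply hx12
      have h' : x2 - x1 = 0 := by rw [hdAB, h, hB, zero_smul, zero_smul, add_zero]
      exact (sub_eq_zero.mp h').symm
    rw [hB, zero_smul, add_zero] at hdAB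
    have hm : ((t1 - 1) / (r - r * t2 - 1 + t1)) • (x2 - x1) + x1 = t1 • b := by
      rw [hdAB, ht1, smul_smul, div_mul_cancel₀ _ hA]
      module
    have hfm := hconst _ ⟨(t1 - 1) / (r - r * t2 - 1 + t1), rfl⟩
    rw [hm] at hfm
    obtain ⟨w, hw⟩ := hBspan t1
    have hzero : (t0 - 1) • f a + (w - t0) • f b = 0 := by
      have hh : (t0 - 1) • f a + (w - t0) • f b
          = w • f b - (t0 • (f b - f a) + f a) := by module
      rw [hh, ← hw, hfm, sub_self]
    have ht01 : t0 = 1 := by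
      have := (hind _ _ hzero).1
      linarith
    have hsb1 : sb = 1 := by
      rw [ht0def] at ht01
      field_simp [hsab] at ht01
      have h' : sa * (sb - 1) = 0 := by ring_nf; linarith [ht01]
      rcases mul_eq_zero.mp h' with h'' | h''
      · exact absurd h'' hsa0
      · linarith
    have hPfb : t0 • (f b - f a) + f a = f b := by rw [ht01]; module
    have hx1b : x1 = b := hinj1 hx1L hbL1 (by rw [hfx1, hPfb])
    have ht1_1 : t1 = 1 := by
      rw [ht1] at hx1b
      have h' : (t1 - 1) • (b - a) = 0 := by
        rw [show (t1 - 1) • (b - a) = (t1 • (b - a) + a) - b from by module, hx1b, sub_self]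
      rcases smul_eq_zero.mp h' with h'' | h''
      · linarith
      · exact absurd h'' hba
    have hx2rb : x2 = r • b := by
      refine hinj2 hx2L hrbL2 ?_
      rw [hfx2, hPfb, hsb, hsb1, one_smul]
    have ht2_1 : t2 = 1 := by
      rw [ht2] at hx2rb
      have h' : (t2 - 1) • (r • b - r • a) = 0 := by
        rw [show (t2 - 1) • (r • b - r • a) = (t2 • (r • b - r • a) + r • a) - r • b from by
          module, hx2rb, sub_self]
      rcases smul_eq_zero.mp h' with h'' | h''
      · linarith
      · exact absurd h'' hrba
    rw [ht1_1, ht2_1] at hB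
    exact hr1 (by linarith)
  · -- intersect M with span a
    have hm : ((-t1) / (r * t2 - t1)) • (x2 - x1) + x1
        = (1 - t1 + (-t1 / (r * t2 - t1)) * (r - r * t2 - 1 + t1)) • a := by
      rw [hdAB, ht1]
      match_scalars <;> field_simp <;> ring
    have hfm := hconst _ ⟨(-t1) / (r * t2 - t1), rfl⟩
    rw [hm] at hfm
    obtain ⟨w, hw⟩ := hAspan (1 - t1 + (-t1 / (r * t2 - t1)) * (r - r * t2 - 1 + t1))
    have hzero : (w - 1 + t0) • f a + (-t0) • f b = 0 := by
      have hh : (w - 1 + t0) • f a + (-t0) • f b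
          = w • f a - (t0 • (f b - f a) + f a) := by module
      rw [hh, ← hw, hfm, sub_self]
    have ht00 : t0 = 0 := by
      have := (hind _ _ hzero).2
      linarith
    have hsa1 : sa = 1 := by
      rw [ht0def] at ht00
      rw [div_eq_zero_iff] at ht00
      rcases ht00 with h' | h'
      · rcases mul_eq_zero.mp h' with h'' | h''
        · exact absurd h'' hsb0
        · linarith
      · exact absurd h' hsab
    have hPfa : t0 • (f b - f a) + f a = f a := by rw [ht00]; module
    have hx1a : x1 = a := hinj1 hx1L haL1 (by rw [hfx1, hPfa])
    have ht1_0 : t1 = 0 := by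
      rw [ht1] at hx1a
      have h' : t1 • (b - a) = 0 := by
        rw [show t1 • (b - a) = (t1 • (b - a) + a) - a from by module, hx1a, sub_self]
      rcases smul_eq_zero.mp h' with h'' | h''
      · exact h''
      · exact absurd h'' hba
    have hx2ra : x2 = r • a := by
      refine hinj2 hx2L hraL2 ?_
      rw [hfx2, hPfa, hsa, hsa1, one_smul]
    have ht2_0 : t2 = 0 := by
      rw [ht2] at hx2ra
      have h' : t2 • (r • b - r • a) = 0 := by
        rw [show t2 • (r • b - r • a) = (t2 • (r • b - r • a) + r • a) - r • a from by module,
          hx2ra, sub_self]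
      rcases smul_eq_zero.mp h' with h'' | h''
      · exact h''
      · exact absurd h'' hrba
    rw [ht1_0, ht2_0] at hB
    exact hB (by ring)
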